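/- (Subdivision makes the distance function a filtering function) Let G be a finite connected simple graph, let V⁰ be a nonempty set of vertices of G, and let D be the graph distance to V⁰. Let G' be the graph obtained from G by subdividing every edge {u,v} with D(u) = D(v): its vertex set is V(G) ⊔ E₀, where E₀ is the set of edges {u,v} of G with D(u) = D(v), each such edge e = {u,v} is replaced by the two edges {u,e} and {e,v}, and all other edges of G are kept. Let D' be the graph distance in G' to V⁰. Then: (i) D'(v) = D(v) for every vertex v of G; (ii) D'(e) = D(u) + 1 for every new vertex e = {u,v} ∈ E₀; and (iii) D' is a filtering function for (G', V⁰), i.e. D'(u) ≠ D'(v) for every edge {u,v} of G', and every vertex v of G' either has a neighbor v' with D'(v') < D'(v), or satisfies D'(v) = 0 and v ∈ V⁰. -/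

import Mathlib

noncomputable section

open SimpleGraph

/-- The graph distance of a vertex `v` to a set `S` of vertices: the minimum number of
edges of a walk from `v` to some vertex of `S`. -/
def distToSet {V : Type*} (G : SimpleGraph V) (S : Set V) (v : V) : ℕ :=
  sInf ((fun u => G.dist v u) '' S)

/-- `L` is a filtering function for `(G, S)` if adjacent vertices have distinct values
and every vertex either has a neighbor with strictly smaller value, or has value `0` and
lies in `S`. -/
def IsFilteringFunction {V : Type*} (G : SimpleGraph V) (S : Set V) (L : V → ℕ) : Prop :=
  (∀ u v : V, G.Adj u v → L u ≠ L v) ∧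
  (∀ v : V, (∃ v' : V, G.Adj v v' ∧ L v' < L v) ∨ (L v = 0 ∧ v ∈ S))

/-- The predicate on an unordered pair `e` that both of its members have the same value
of `D`. -/
def sameLevel {V : Type*} (D : V → ℕ) (e : Sym2 V) : Prop :=
  Sym2.lift ⟨fun u v => D u = D v, fun _ _ => propext eq_comm⟩ e

/-- The set of edges of `G` whose two endpoints have the same value of `D`. -/
def levelEdges {V : Type*} (G : SimpleGraph V) (D : V → ℕ) : Type _ :=
  {e : Sym2 V // e ∈ G.edgeSet ∧ sameLevel D e}

/-- The graph obtained from `G` by subdividing every edge `{u,v}` with `D u = D v`: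
each such edge `e = {u,v}` becomes a new vertex joined to `u` and to `v`, and all other
edges of `G` are kept. -/
def Subdiv {V : Type*} (G : SimpleGraph V) (D : V → ℕ) :
    SimpleGraph (V ⊕ levelEdges G D) where
  Adj x y :=
    match x, y with
    | Sum.inl u, Sum.inl v => G.Adj u v ∧ D u ≠ D v
    | Sum.inl u, Sum.inr e => u ∈ e.val
    | Sum.inr e, Sum.inl u => u ∈ e.val
    | Sum.inr _, Sum.inr _ => False
  symm := by
    constructor
    rintro (u | e) (v | f) h
    · exact ⟨h.1.symm, h.2.symm⟩
    · exact h
    · exact h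
    · exact h.elim
  loopless := by
    constructor
    rintro (u | e) h
    · exact h.2 rfl
    · exact h

section Aux

variable {V : Type*} {G : SimpleGraph V} {V0 : Set V}

lemma sym2_exists_rep (z : Sym2 V) : ∃ a b : V, z = s(a, b) := by
  induction z using Sym2.ind with
  | _ a b => exact ⟨a, b, rfl⟩

lemma distToSet_le' (v : V) {u : V} (hu : u ∈ V0) : distToSet G V0 v ≤ G.dist v u :=
  Nat.sInf_le ⟨u, hu, rfl⟩

lemma distToSet_exists' (hV0 : V0.Nonempty) (v : V) :
    ∃ u ∈ V0, distToSet G V0 v = G.dist v u := by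
  obtain ⟨u, hu, he⟩ := Nat.sInf_mem (hV0.image (fun u => G.dist v u))
  exact ⟨u, hu, he.symm⟩

lemma distToSet_eq_zero_iff' (hG : G.Connected) (hV0 : V0.Nonempty) (v : V) :
    distToSet G V0 v = 0 ↔ v ∈ V0 := by
  constructor
  · intro h
    obtain ⟨u, hu, he⟩ := distToSet_exists' hV0 v
    rw [h] at he
    rwa [(hG.dist_eq_zero_iff).mp he.symm]
  · intro h
    have := distToSet_le' (G := G) v h
    simpa [SimpleGraph.dist_self] using this

lemma distToSet_adj_le' (hG : G.Connected) (hV0 : V0.Nonempty) {u v : V} (h : G.Adj u v) :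
    distToSet G V0 u ≤ distToSet G V0 v + 1 := by
  obtain ⟨w, hw, he⟩ := distToSet_exists' hV0 v
  obtain ⟨p, hp⟩ := hG.exists_walk_length_eq_dist v w
  calc distToSet G V0 u ≤ G.dist u w := distToSet_le' u hw
    _ ≤ (p.cons h).length := SimpleGraph.dist_le _
    _ = p.length + 1 := by simp [SimpleGraph.Walk.length_cons]
    _ = distToSet G V0 v + 1 := by rw [hp, ← he]

lemma distToSet_descend' (hG : G.Connected) (hV0 : V0.Nonempty) {v : V}
    (hpos : 0 < distToSet G V0 v) :
    ∃ u, G.Adj v u ∧ distToSet G V0 u + 1 = distToSet G V0 v := by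
  obtain ⟨w, hw, he⟩ := distToSet_exists' hV0 v
  obtain ⟨p, hp⟩ := hG.exists_walk_length_eq_dist v w
  cases p with
  | nil =>
    rw [SimpleGraph.dist_self] at he
    rw [he] at hpos
    exact absurd hpos (lt_irrefl 0)
  | @cons _ u _ h q =>
    refine ⟨u, h, ?_⟩
    have h1 : distToSet G V0 u ≤ q.length :=
      le_trans (distToSet_le' u hw) (SimpleGraph.dist_le q)
    have h2 : distToSet G V0 v ≤ distToSet G V0 u + 1 := distToSet_adj_le' hG hV0 h
    have h3 : q.length + 1 = distToSet G V0 v := by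
      rw [he]
      simpa [SimpleGraph.Walk.length_cons] using hp
    omega

/-- The candidate distance function on the subdivided graph. -/
def fsub (G : SimpleGraph V) (D : V → ℕ) : V ⊕ levelEdges G D → ℕ :=
  Sum.elim D (fun e =>
    Sym2.lift ⟨fun a b => max (D a) (D b) + 1, fun a b => by simp [max_comm]⟩ e.val)

lemma fsub_inl (D : V → ℕ) (v : V) : fsub G D (Sum.inl v) = D v := rfl

lemma fsub_inr {D : V → ℕ} (e : levelEdges G D) {u : V} (hu : u ∈ e.val) :
    fsub G D (Sum.inr e) = D u + 1 := by
  obtain ⟨a, b, hab⟩ := sym2_exists_rep e.val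
  have hl : D a = D b := by
    have := e.2.2
    rw [hab] at this
    simpa [sameLevel] using this
  rw [hab] at hu
  rcases Sym2.mem_iff.mp hu with rfl | rfl
  · simp [fsub, hab, hl]
  · simp [fsub, hab, hl]

lemma fsub_adj_le {D : V → ℕ} (hadj : ∀ u v, G.Adj u v → D u ≤ D v + 1)
    {x y : V ⊕ levelEdges G D} (h : (Subdiv G D).Adj x y) :
    fsub G D x ≤ fsub G D y + 1 := by
  rcases x with u | e <;> rcases y with v | f
  · exact hadj u v h.1
  · rw [fsub_inr f h, fsub_inl]
    omega
  · rw [fsub_inr e h, fsub_inl]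
  · exact h.elim

lemma fsub_le_of_walk {D : V → ℕ} (hadj : ∀ u v, G.Adj u v → D u ≤ D v + 1)
    {x y : V ⊕ levelEdges G D} (p : (Subdiv G D).Walk x y) :
    fsub G D x ≤ fsub G D y + p.length := by
  induction p with
  | nil => simp
  | cons h q ih =>
    have h1 := fsub_adj_le hadj h
    simp only [SimpleGraph.Walk.length_cons]
    omega

lemma subdiv_reachable_inl (hG : G.Connected) (D : V → ℕ) (a b : V) :
    (Subdiv G D).Reachable (Sum.inl a) (Sum.inl b) := by
  obtain ⟨p⟩ := hG a b
  induction p with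
  | nil => exact SimpleGraph.Reachable.refl _
  | @cons x y z h q ih =>
    refine SimpleGraph.Reachable.trans ?_ ih
    by_cases hd : D x = D y
    · have he : s(x, y) ∈ G.edgeSet := G.mem_edgeSet.mpr h
      have hs : sameLevel D s(x, y) := by simpa [sameLevel] using hd
      set e : levelEdges G D := ⟨s(x, y), he, hs⟩ with hedef
      have h1 : (Subdiv G D).Adj (Sum.inl x) (Sum.inr e) := Sym2.mem_mk_left x y
      have h2 : (Subdiv G D).Adj (Sum.inr e) (Sum.inl y) := Sym2.mem_mk_right x y
      exact h1.reachable.trans h2.reachable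
    · exact (SimpleGraph.Adj.reachable (⟨h, hd⟩ :
        (Subdiv G D).Adj (Sum.inl x) (Sum.inl y)))

lemma subdiv_reachable (hG : G.Connected) (D : V → ℕ) (x : V ⊕ levelEdges G D) (w : V) :
    (Subdiv G D).Reachable x (Sum.inl w) := by
  rcases x with v | e
  · exact subdiv_reachable_inl hG D v w
  · obtain ⟨a, b, hab⟩ := sym2_exists_rep e.val
    have ha : a ∈ e.val := by rw [hab]; exact Sym2.mem_mk_left a b
    exact (SimpleGraph.Adj.reachable (ha : (Subdiv G D).Adj (Sum.inr e) (Sum.inl a))).trans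
      (subdiv_reachable_inl hG D a w)

end Aux

/-- **Subdivision makes the distance function a filtering function.** Let `G` be a finite
connected simple graph, `V⁰` a nonempty set of vertices, and `D` the graph distance to
`V⁰`. Subdividing every edge whose endpoints have equal distance yields a graph `G'`
whose distance function `D'` to `V⁰` satisfies: `D' = D` on old vertices, `D' = D u + 1`
on the new vertex coming from an edge `{u,v}` with `D u = D v`, and `D'` is a filtering
function for `(G', V⁰)`. -/
theorem subdivision_distance_filtering {V : Type*} [Fintype V]
    (G : SimpleGraph V) (hG : G.Connected) (V0 : Set V) (hV0 : V0.Nonempty)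
    (D : V → ℕ) (hD : D = distToSet G V0) :
    (∀ v : V, distToSet (Subdiv G D) (Sum.inl '' V0) (Sum.inl v) = D v) ∧
    (∀ e : levelEdges G D, ∀ u v : V, e.val = s(u, v) →
      distToSet (Subdiv G D) (Sum.inl '' V0) (Sum.inr e) = D u + 1) ∧
    IsFilteringFunction (Subdiv G D) (Sum.inl '' V0)
      (distToSet (Subdiv G D) (Sum.inl '' V0)) := by
  have hzero : ∀ v, D v = 0 ↔ v ∈ V0 := by
    rw [hD]; exact distToSet_eq_zero_iff' hG hV0
  have hadj : ∀ u v, G.Adj u v → D u ≤ D v + 1 := by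
    rw [hD]; exact fun u v h => distToSet_adj_le' hG hV0 h
  have hdesc : ∀ v, 0 < D v → ∃ u, G.Adj v u ∧ D u + 1 = D v := by
    rw [hD]; exact fun v h => distToSet_descend' hG hV0 h
  have hS'ne : (Sum.inl '' V0 : Set (V ⊕ levelEdges G D)).Nonempty := hV0.image _
  -- lower bound: fsub ≤ dist to S' in G'
  have hlow : ∀ x, fsub G D x ≤ distToSet (Subdiv G D) (Sum.inl '' V0) x := by
    intro x
    obtain ⟨y, hy, he⟩ := distToSet_exists' (G := Subdiv G D) hS'ne x
    obtain ⟨w, hw, rfl⟩ := hy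
    obtain ⟨p, hp⟩ := (subdiv_reachable hG D x w).exists_walk_length_eq_dist
    have hp' : p.length = (Subdiv G D).dist x (Sum.inl w) := hp
    have h1 := fsub_le_of_walk hadj p
    have h2 : fsub G D (Sum.inl w) = 0 := (hzero w).mpr hw
    omega
  -- one-step triangle inequality in G'
  have hstep : ∀ (x y : V ⊕ levelEdges G D), (Subdiv G D).Adj x y →
      distToSet (Subdiv G D) (Sum.inl '' V0) x ≤
        distToSet (Subdiv G D) (Sum.inl '' V0) y + 1 := by
    intro x y hxy
    obtain ⟨z, hz, he⟩ := distToSet_exists' (G := Subdiv G D) hS'ne y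
    obtain ⟨w, hw, rfl⟩ := hz
    obtain ⟨p, hp⟩ := (subdiv_reachable hG D y w).exists_walk_length_eq_dist
    have hp' : p.length = (Subdiv G D).dist y (Sum.inl w) := hp
    have h1 : (Subdiv G D).dist x (Sum.inl w) ≤ (p.cons hxy).length :=
      SimpleGraph.dist_le _
    have h2 : distToSet (Subdiv G D) (Sum.inl '' V0) x ≤ (Subdiv G D).dist x (Sum.inl w) :=
      distToSet_le' x (show Sum.inl w ∈ Sum.inl '' V0 from ⟨w, hw, rfl⟩)
    simp only [SimpleGraph.Walk.length_cons] at h1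
    omega
  -- upper bound on old vertices
  have hup_inl : ∀ v, distToSet (Subdiv G D) (Sum.inl '' V0) (Sum.inl v) ≤ D v := by
    intro v
    generalize hgen : D v = n
    induction n generalizing v with
    | zero =>
      have hv : v ∈ V0 := (hzero v).mp hgen
      have h := distToSet_le' (G := Subdiv G D) (Sum.inl v)
        (show Sum.inl v ∈ Sum.inl '' V0 from ⟨v, hv, rfl⟩)
      simpa [SimpleGraph.dist_self] using h
    | succ n ih =>
      obtain ⟨u, hadjvu, hu⟩ := hdesc v (by omega)
      have hun : D u = n := by omega
      have h2 := ih u hun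
      have h3 : (Subdiv G D).Adj (Sum.inl v) (Sum.inl u) := ⟨hadjvu, by omega⟩
      have h4 := hstep _ _ h3
      omega
  have heq_inl : ∀ v, distToSet (Subdiv G D) (Sum.inl '' V0) (Sum.inl v) = D v := fun v =>
    le_antisymm (hup_inl v) (hlow (Sum.inl v))
  have heq_inr : ∀ (e : levelEdges G D) (u : V), u ∈ e.val →
      distToSet (Subdiv G D) (Sum.inl '' V0) (Sum.inr e) = D u + 1 := by
    intro e u hu
    have h1 : (Subdiv G D).Adj (Sum.inr e) (Sum.inl u) := hu
    have h2 := hstep _ _ h1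
    have h3 := hlow (Sum.inr e)
    rw [fsub_inr e hu] at h3
    rw [heq_inl] at h2
    omega
  refine ⟨heq_inl, ?_, ?_, ?_⟩
  · intro e u v hev
    exact heq_inr e u (by rw [hev]; exact Sym2.mem_mk_left u v)
  · -- adjacent vertices have distinct values
    rintro (u | e) (v | f) hxy
    · rw [heq_inl, heq_inl]; exact hxy.2
    · rw [heq_inl, heq_inr f u hxy]; omega
    · rw [heq_inr e v hxy, heq_inl]; omega
    · exact hxy.elim
  · -- descent property
    rintro (v | e)
    · by_cases h0 : D v = 0
      · exact Or.inr ⟨by rw [heq_inl]; exact h0, ⟨v, (hzero v).mp h0, rfl⟩⟩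
      · obtain ⟨u, ha, hu⟩ := hdesc v (by omega)
        exact Or.inl ⟨Sum.inl u, ⟨ha, by omega⟩, by rw [heq_inl, heq_inl]; omega⟩
    · obtain ⟨a, b, hab⟩ := sym2_exists_rep e.val
      have ha : a ∈ e.val := by rw [hab]; exact Sym2.mem_mk_left a b
      exact Or.inl ⟨Sum.inl a, ha, by rw [heq_inl, heq_inr e a ha]; omega⟩
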